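/- Let β=(β_n)_{n∈ℕ} be a Cantor base with x_β<+∞. Then Fac(D'_β)=Fac(Δ'_β)=Fac(Σ'_β), where Fac(L) denotes the set of finite factors (contiguous finite subwords) of the infinite words in L. -/

import Mathlib

open Filter Topology

/-- A Cantor real base: a sequence of reals `> 1` whose infinite product diverges to `+∞`. -/
structure IsCantorBase (β : ℕ → ℝ) : Prop where
  one_lt : ∀ n, 1 < β n
  prod_tendsto : Tendsto (fun N => ∏ i ∈ Finset.range N, β i) atTop atTop

/-- The product `β_0 ⋯ β_n`. -/
noncomputable def prodUpTo (β : ℕ → ℝ) (n : ℕ) : ℝ := ∏ i ∈ Finset.range (n + 1), β i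

/-- The shifted base `β^(n) = (β_n, β_{n+1}, …)`. -/
def shiftBase (β : ℕ → ℝ) (n : ℕ) : ℕ → ℝ := fun m => β (n + m)

/-- `x_β = Σ_{n} (⌈β_n⌉ - 1)/(β_0 ⋯ β_n)`. -/
noncomputable def xB (β : ℕ → ℝ) : ℝ := ∑' n, ((⌈β n⌉ : ℝ) - 1) / prodUpTo β n

/-- The condition `x_β < +∞`, i.e. the series defining `x_β` converges. -/
def XBSummable (β : ℕ → ℝ) : Prop :=
  Summable (fun n => ((⌈β n⌉ : ℝ) - 1) / prodUpTo β n)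

/-- `val_β(a) = Σ_n a_n/(β_0 ⋯ β_n)`. -/
noncomputable def valB (β : ℕ → ℝ) (a : ℕ → ℤ) : ℝ := ∑' n, (a n : ℝ) / prodUpTo β n

/-- The digit condition `a_n ∈ [[0, ⌈β_n⌉ - 1]]` for all `n`. -/
def validWord (β : ℕ → ℝ) (a : ℕ → ℤ) : Prop := ∀ n, 0 ≤ a n ∧ a n ≤ ⌈β n⌉ - 1

/-- The flip map `θ_β`. -/
noncomputable def theta (β : ℕ → ℝ) (a : ℕ → ℤ) : ℕ → ℤ := fun n => ⌈β n⌉ - 1 - a n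

/-- The greedy remainders `r_{β,n}(x)`. -/
noncomputable def greedyR (β : ℕ → ℝ) (x : ℝ) : ℕ → ℝ
  | 0 => β 0 * x - (⌊β 0 * x⌋ : ℝ)
  | n + 1 => β (n + 1) * greedyR β x n - (⌊β (n + 1) * greedyR β x n⌋ : ℝ)

/-- The greedy digits `ε_{β,n}(x)`; `greedyDigit β x` is the greedy β-expansion `d_β(x)`. -/
noncomputable def greedyDigit (β : ℕ → ℝ) (x : ℝ) : ℕ → ℤ
  | 0 => ⌊β 0 * x⌋
  | n + 1 => ⌊β (n + 1) * greedyR β x n⌋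

/-- The lazy remainders `s_{β,n}(x)`. -/
noncomputable def lazyS (β : ℕ → ℝ) (x : ℝ) : ℕ → ℝ
  | 0 => β 0 * x - (⌈β 0 * x - xB (shiftBase β 1)⌉ : ℝ)
  | n + 1 => β (n + 1) * lazyS β x n -
      (⌈β (n + 1) * lazyS β x n - xB (shiftBase β (n + 2))⌉ : ℝ)

/-- The lazy digits `ξ_{β,n}(x)`; `lazyDigit β x` is the lazy β-expansion `ℓ_β(x)`. -/
noncomputable def lazyDigit (β : ℕ → ℝ) (x : ℝ) : ℕ → ℤ
  | 0 => ⌈β 0 * x - xB (shiftBase β 1)⌉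
  | n + 1 => ⌈β (n + 1) * lazyS β x n - xB (shiftBase β (n + 2))⌉

/-- Strict lexicographic order on infinite words. -/
def lexLt (a b : ℕ → ℤ) : Prop := ∃ k, (∀ i < k, a i = b i) ∧ a k < b k

/-- Lexicographic order on infinite words. -/
def lexLe (a b : ℕ → ℤ) : Prop := lexLt a b ∨ a = b

/-- `D_β`, the set of greedy β-expansions of points of `[0,1)`. -/
def greedySet (β : ℕ → ℝ) : Set (ℕ → ℤ) :=
  {a | ∃ x ∈ Set.Ico (0 : ℝ) 1, a = greedyDigit β x}

/-- `D'_β`, the set of lazy β-expansions of points of `(x_β - 1, x_β]`. -/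
def lazySet (β : ℕ → ℝ) : Set (ℕ → ℤ) :=
  {a | ∃ x ∈ Set.Ioc (xB β - 1) (xB β), a = lazyDigit β x}

/-- `Δ'_β = ⋃_n D'_{β^(n)}`. -/
def deltaSet (β : ℕ → ℝ) : Set (ℕ → ℤ) := ⋃ n, lazySet (shiftBase β n)

/-- The set of finite factors of the infinite words in `L`. -/
def Fac (L : Set (ℕ → ℤ)) : Set (List ℤ) :=
  {w | ∃ a ∈ L, ∃ k : ℕ, ∀ i : Fin w.length, w.get i = a (k + i)}


lemma shift_shift (β : ℕ → ℝ) (a b : ℕ) : shiftBase (shiftBase β a) b = shiftBase β (a + b) := by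
  funext n; simp [shiftBase, add_assoc]

lemma shift_zero (β : ℕ → ℝ) : shiftBase β 0 = β := by funext n; simp [shiftBase]

lemma prodUpTo_pos (β : ℕ → ℝ) (hβ : ∀ n, 1 < β n) (n : ℕ) : 0 < prodUpTo β n :=
  Finset.prod_pos fun i _ => lt_trans one_pos (hβ i)

lemma prodUpTo_shift (β : ℕ → ℝ) (n : ℕ) :
    prodUpTo β (n + 1) = β 0 * prodUpTo (shiftBase β 1) n := by
  simp only [prodUpTo, shiftBase]
  rw [Finset.prod_range_succ', mul_comm]
  congr 1
  exact Finset.prod_congr rfl fun i _ => by rw [add_comm]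

lemma xbsummable_shift (β : ℕ → ℝ) (hβ : ∀ n, 1 < β n) (hx : XBSummable β) :
    XBSummable (shiftBase β 1) := by
  have h0 : β 0 ≠ 0 := ne_of_gt (lt_trans one_pos (hβ 0))
  have h : Summable (fun n => ((⌈β (n + 1)⌉ : ℝ) - 1) / prodUpTo β (n + 1)) :=
    (summable_nat_add_iff (f := fun n => ((⌈β n⌉ : ℝ) - 1) / prodUpTo β n) 1).2 hx
  refine (h.mul_left (β 0)).congr fun n => ?_
  show β 0 * (((⌈β (n + 1)⌉ : ℝ) - 1) / prodUpTo β (n + 1)) = _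
  rw [prodUpTo_shift, mul_div_assoc', mul_div_mul_left _ _ h0]
  simp only [shiftBase]
  rw [add_comm 1 n]

lemma xB_eq (β : ℕ → ℝ) (hβ : ∀ n, 1 < β n) (hx : XBSummable β) :
    xB β = (((⌈β 0⌉ : ℝ) - 1) + xB (shiftBase β 1)) / β 0 := by
  have h0 : (0 : ℝ) < β 0 := lt_trans one_pos (hβ 0)
  have h2 : ∀ n : ℕ, ((⌈β (n + 1)⌉ : ℝ) - 1) / prodUpTo β (n + 1)
      = (((⌈shiftBase β 1 n⌉ : ℝ) - 1) / prodUpTo (shiftBase β 1) n) / β 0 := by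
    intro n
    rw [prodUpTo_shift, div_div, mul_comm]
    simp [shiftBase, add_comm 1 n]
  rw [xB, Summable.tsum_eq_zero_add hx]
  have : ∑' n : ℕ, ((⌈β (n + 1)⌉ : ℝ) - 1) / prodUpTo β (n + 1)
      = xB (shiftBase β 1) / β 0 := by
    rw [tsum_congr h2, tsum_div_const]; rfl
  rw [this]
  have hP0 : prodUpTo β 0 = β 0 := by simp [prodUpTo]
  rw [hP0, add_div]

lemma lazyS_mem (β : ℕ → ℝ) (x : ℝ) (n : ℕ) :
    lazyS β x n ∈ Set.Ioc (xB (shiftBase β (n + 1)) - 1) (xB (shiftBase β (n + 1))) := by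
  cases n with
  | zero =>
    have h1 := Int.le_ceil (β 0 * x - xB (shiftBase β 1))
    have h2 := Int.ceil_lt_add_one (β 0 * x - xB (shiftBase β 1))
    exact ⟨by show _ < β 0 * x - _; linarith, by show β 0 * x - _ ≤ _; linarith⟩
  | succ n =>
    have h1 := Int.le_ceil (β (n + 1) * lazyS β x n - xB (shiftBase β (n + 2)))
    have h2 := Int.ceil_lt_add_one (β (n + 1) * lazyS β x n - xB (shiftBase β (n + 2)))
    exact ⟨by show _ < β (n + 1) * lazyS β x n - _; linarith,
           by show β (n + 1) * lazyS β x n - _ ≤ _; linarith⟩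

lemma lazy_shift (β : ℕ → ℝ) (x : ℝ) (n k : ℕ) :
    lazyDigit β x (n + 1 + k) = lazyDigit (shiftBase β (n + 1)) (lazyS β x n) k ∧
    lazyS β x (n + 1 + k) = lazyS (shiftBase β (n + 1)) (lazyS β x n) k := by
  induction k with
  | zero =>
    constructor
    · show lazyDigit β x (n + 1) = _
      simp only [lazyDigit, shift_shift]
      rfl
    · show lazyS β x (n + 1) = _
      simp only [lazyS, shift_shift]
      rfl
  | succ k ih =>
    constructor
    · show lazyDigit β x (n + 1 + k + 1) = _
      simp only [lazyDigit, shift_shift, ih.2]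
      rfl
    · show lazyS β x (n + 1 + k + 1) = _
      simp only [lazyS, shift_shift, ih.2]
      rfl

lemma extend_lemma (m : ℕ) : ∀ (β : ℕ → ℝ), (∀ n, 1 < β n) → XBSummable β →
    ∀ y ∈ Set.Ioc (xB (shiftBase β m) - 1) (xB (shiftBase β m)),
    ∃ x ∈ Set.Ioc (xB β - 1) (xB β),
      ∀ k, lazyDigit β x (m + k) = lazyDigit (shiftBase β m) y k := by
  induction m with
  | zero =>
    intro β _ _ y hy
    exact ⟨y, by rwa [shift_zero] at hy, fun k => by rw [shift_zero, Nat.zero_add]⟩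
  | succ m ih =>
    intro β hβ hx y hy
    have hβ' : ∀ n, 1 < shiftBase β 1 n := fun n => hβ _
    have hx' : XBSummable (shiftBase β 1) := xbsummable_shift β hβ hx
    have hss : shiftBase (shiftBase β 1) m = shiftBase β (m + 1) := by
      rw [shift_shift, add_comm]
    obtain ⟨x', hmem, hdig⟩ := ih (shiftBase β 1) hβ' hx' y (by rwa [hss])
    set c : ℝ := (⌈β 0⌉ : ℝ) - 1 with hc
    have hβ0 : (1 : ℝ) < β 0 := hβ 0
    have hβ0' : (0 : ℝ) < β 0 := lt_trans one_pos hβ0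
    have hxB : xB β = (c + xB (shiftBase β 1)) / β 0 := xB_eq β hβ hx
    have hmul : β 0 * ((c + x') / β 0) = c + x' := by field_simp
    have hceil : (⌈β 0 * ((c + x') / β 0) - xB (shiftBase β 1)⌉ : ℤ) = ⌈β 0⌉ - 1 := by
      rw [hmul]
      have e : c + x' - xB (shiftBase β 1)
          = (x' - xB (shiftBase β 1)) + ((⌈β 0⌉ - 1 : ℤ) : ℝ) := by
        push_cast [hc]; ring
      rw [e, Int.ceil_add_intCast]
      have : ⌈x' - xB (shiftBase β 1)⌉ = 0 := by
        rw [Int.ceil_eq_zero_iff]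
        exact ⟨by linarith [hmem.1], by linarith [hmem.2]⟩
      omega
    have hs0 : lazyS β ((c + x') / β 0) 0 = x' := by
      show β 0 * ((c + x') / β 0) - (⌈β 0 * ((c + x') / β 0) - xB (shiftBase β 1)⌉ : ℝ) = x'
      rw [hceil, hmul]
      push_cast [hc]; ring
    refine ⟨(c + x') / β 0, ⟨?_, ?_⟩, ?_⟩
    · rw [hxB]
      have e : (c + xB (shiftBase β 1)) / β 0 - 1
          = (c + xB (shiftBase β 1) - β 0) / β 0 := by field_simp
      rw [e, div_lt_div_iff_of_pos_right hβ0']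
      linarith [hmem.1]
    · rw [hxB]
      gcongr
      exact hmem.2
    · intro k
      have harith : m + 1 + k = 0 + 1 + (m + k) := by omega
      rw [harith, (lazy_shift β ((c + x') / β 0) 0 (m + k)).1, hs0]
      have : shiftBase β (0 + 1) = shiftBase β 1 := by norm_num
      rw [this, hdig k, hss]

/-- `Fac(D'_β) = Fac(Δ'_β) = Fac(Σ'_β)`. -/
theorem fac_eq (β : ℕ → ℝ) (hβ : IsCantorBase β) (hx : XBSummable β) :
    Fac (lazySet β) = Fac (deltaSet β) ∧ Fac (deltaSet β) = Fac (closure (deltaSet β)) := by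
  constructor
  · ext w
    constructor
    · rintro ⟨a, ha, k, h⟩
      refine ⟨a, Set.mem_iUnion.2 ⟨0, ?_⟩, k, h⟩
      rwa [shift_zero]
    · rintro ⟨a, ha, k, h⟩
      obtain ⟨n, y, hy, rfl⟩ : ∃ n y, y ∈ Set.Ioc (xB (shiftBase β n) - 1) (xB (shiftBase β n))
          ∧ a = lazyDigit (shiftBase β n) y := by
        obtain ⟨n, hn⟩ := Set.mem_iUnion.1 ha
        obtain ⟨y, hy, rfl⟩ := hn
        exact ⟨n, y, hy, rfl⟩
      obtain ⟨x, hxmem, hdig⟩ := extend_lemma n β hβ.one_lt hx y hy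
      refine ⟨lazyDigit β x, ⟨x, hxmem, rfl⟩, n + k, fun i => ?_⟩
      rw [h i, ← hdig (k + i)]
      congr 1
      omega
  · ext w
    constructor
    · rintro ⟨a, ha, k, h⟩
      exact ⟨a, subset_closure ha, k, h⟩
    · rintro ⟨a, ha, k, h⟩
      set N := k + w.length with hN
      have hU : IsOpen {c : ℕ → ℤ | ∀ i ∈ Finset.range N, c i = a i} := by
        have he : {c : ℕ → ℤ | ∀ i ∈ Finset.range N, c i = a i}
            = Set.pi ↑(Finset.range N) (fun i => {a i}) := by
          ext c; simp [Set.mem_pi]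
        rw [he]
        exact isOpen_set_pi (Finset.range N).finite_toSet fun i _ => isOpen_discrete _
      obtain ⟨b, hbU, hbD⟩ := mem_closure_iff.mp ha _ hU (fun i _ => rfl)
      refine ⟨b, hbD, k, fun i => ?_⟩
      rw [h i]
      exact (hbU (k + i) (Finset.mem_range.2 (by omega))).symm
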